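/- Let γ ≥ 0 and p ≥ 1. The smooth Schatten-p function f_p : ℝ^{m×n} → ℝ defined by f_p(X) = Tr((XᵀX + γI)^{p/2}) = Σ_{i=1}^n (λ_i(XᵀX) + γ)^{p/2}, where λ_i(XᵀX) are the eigenvalues of XᵀX and the matrix power is taken via the spectral functional calculus, is a convex function of X on all of ℝ^{m×n}. -/

import Mathlib

open Matrix Polynomial
open scoped RealInnerProductSpace

section Helpers

variable {ι : Type*} [Fintype ι] [DecidableEq ι]

/-- Matrix-vector multiplication as a map on Euclidean space. -/
noncomputable def smoothSchattenMv (A : Matrix ι ι ℝ) (w : EuclideanSpace ℝ ι) :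
    EuclideanSpace ℝ ι :=
  (WithLp.equiv 2 _).symm (A *ᵥ (WithLp.equiv 2 _ w))

local notation "mv" => smoothSchattenMv

omit [Fintype ι] [DecidableEq ι] in
lemma transpose_eq_self_of_herm {A : Matrix ι ι ℝ} (hA : A.IsHermitian) : Aᵀ = A := by
  conv_rhs => rw [← hA]
  rw [conjTranspose_eq_transpose_of_trivial]

lemma inner_mv_left (A : Matrix ι ι ℝ) (hA : A.IsHermitian) (v w : EuclideanSpace ℝ ι) :
    ⟪v, mv A w⟫ = ⟪mv A v, w⟫ := by
  rw [EuclideanSpace.inner_eq_star_dotProduct, EuclideanSpace.inner_eq_star_dotProduct]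
  simp only [smoothSchattenMv, Equiv.apply_symm_apply, star_trivial, WithLp.equiv_symm_apply,
    WithLp.ofLp_toLp]
  rw [Matrix.dotProduct_mulVec, ← Matrix.mulVec_transpose, transpose_eq_self_of_herm hA]
  rfl

lemma mv_eig (A : Matrix ι ι ℝ) (hA : A.IsHermitian) (j : ι) :
    mv A (hA.eigenvectorBasis j) = hA.eigenvalues j • hA.eigenvectorBasis j := by
  apply (WithLp.equiv 2 _).injective
  simp only [smoothSchattenMv, Equiv.apply_symm_apply]
  exact hA.mulVec_eigenvectorBasis j

lemma quad_expand (A : Matrix ι ι ℝ) (hA : A.IsHermitian) (w : EuclideanSpace ℝ ι) :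
    ⟪w, mv A w⟫ = ∑ j, (⟪w, hA.eigenvectorBasis j⟫ * ⟪hA.eigenvectorBasis j, w⟫)
      • hA.eigenvalues j := by
  rw [← OrthonormalBasis.sum_inner_mul_inner hA.eigenvectorBasis w (mv A w)]
  apply Finset.sum_congr rfl
  intro j _
  rw [inner_mv_left A hA, mv_eig A hA j, real_inner_smul_left, smul_eq_mul]
  ring

/-- Peierls inequality. -/
lemma peierls {ψ : ℝ → ℝ} (hψ : ConvexOn ℝ Set.univ ψ) (A : Matrix ι ι ℝ) (hA : A.IsHermitian)
    (u : OrthonormalBasis ι ℝ (EuclideanSpace ℝ ι)) :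
    ∑ i, ψ ⟪u i, mv A (u i)⟫ ≤ ∑ j, ψ (hA.eigenvalues j) := by
  set v := hA.eigenvectorBasis with hv
  set c : ι → ι → ℝ := fun i j => ⟪u i, v j⟫ * ⟪v j, u i⟫ with hc
  have hc0 : ∀ i j, 0 ≤ c i j := by
    intro i j
    rw [hc]; dsimp only
    rw [real_inner_comm (v j) (u i)]
    exact mul_self_nonneg _
  have hrow : ∀ i, ∑ j, c i j = 1 := by
    intro i
    rw [hc]; dsimp only
    rw [OrthonormalBasis.sum_inner_mul_inner v (u i) (u i), real_inner_self_eq_norm_sq,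
      u.orthonormal.1 i, one_pow]
  have hcol : ∀ j, ∑ i, c i j = 1 := by
    intro j
    have := OrthonormalBasis.sum_inner_mul_inner u (v j) (v j)
    rw [real_inner_self_eq_norm_sq, v.orthonormal.1 j, one_pow] at this
    rw [← this]
    apply Finset.sum_congr rfl
    intro i _
    rw [hc]; dsimp only; ring
  calc ∑ i, ψ ⟪u i, mv A (u i)⟫
      = ∑ i, ψ (∑ j, c i j • hA.eigenvalues j) := by
        apply Finset.sum_congr rfl
        intro i _
        rw [quad_expand A hA (u i)]
    _ ≤ ∑ i, ∑ j, c i j • ψ (hA.eigenvalues j) := by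
        apply Finset.sum_le_sum
        intro i _
        exact hψ.map_sum_le (fun j _ => hc0 i j) (hrow i) (fun j _ => trivial)
    _ = ∑ j, (∑ i, c i j) • ψ (hA.eigenvalues j) := by
        rw [Finset.sum_comm]
        apply Finset.sum_congr rfl
        intros; rw [Finset.sum_smul]
    _ = ∑ j, ψ (hA.eigenvalues j) := by
        apply Finset.sum_congr rfl
        intro j _
        rw [hcol j, one_smul]

/-- Convexity of the trace of a convex function of a Hermitian matrix, along a segment. -/
lemma trace_psi_convex {ψ : ℝ → ℝ} (hψ : ConvexOn ℝ Set.univ ψ) (A B : Matrix ι ι ℝ)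
    (hA : A.IsHermitian) (hB : B.IsHermitian) (a b : ℝ) (ha : 0 ≤ a) (hb : 0 ≤ b)
    (hab : a + b = 1) (hC : (a • A + b • B).IsHermitian) :
    ∑ k, ψ (hC.eigenvalues k) ≤ a * ∑ j, ψ (hA.eigenvalues j) + b * ∑ j, ψ (hB.eigenvalues j) := by
  set u := hC.eigenvectorBasis with hu
  have hmv : ∀ w : EuclideanSpace ℝ ι, mv (a • A + b • B) w = a • mv A w + b • mv B w := by
    intro w
    apply (WithLp.equiv 2 _).injective
    simp only [smoothSchattenMv, Equiv.apply_symm_apply, Matrix.add_mulVec,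
      Matrix.smul_mulVec]
    rfl
  have heig : ∀ k, hC.eigenvalues k = a * ⟪u k, mv A (u k)⟫ + b * ⟪u k, mv B (u k)⟫ := by
    intro k
    have h1 : ⟪u k, mv (a • A + b • B) (u k)⟫ = hC.eigenvalues k := by
      rw [mv_eig _ hC k, real_inner_smul_right, real_inner_self_eq_norm_sq,
        u.orthonormal.1 k, one_pow, mul_one]
    rw [← h1, hmv, inner_add_right, real_inner_smul_right, real_inner_smul_right]
  calc ∑ k, ψ (hC.eigenvalues k)
      ≤ ∑ k, (a * ψ ⟪u k, mv A (u k)⟫ + b * ψ ⟪u k, mv B (u k)⟫) := by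
        apply Finset.sum_le_sum
        intro k _
        rw [heig k]
        have := hψ.2 (Set.mem_univ ⟪u k, mv A (u k)⟫) (Set.mem_univ ⟪u k, mv B (u k)⟫) ha hb hab
        simpa using this
    _ = a * ∑ k, ψ ⟪u k, mv A (u k)⟫ + b * ∑ k, ψ ⟪u k, mv B (u k)⟫ := by
        rw [Finset.sum_add_distrib, Finset.mul_sum, Finset.mul_sum]
    _ ≤ a * ∑ j, ψ (hA.eigenvalues j) + b * ∑ j, ψ (hB.eigenvalues j) := by
        apply add_le_add
        · exact mul_le_mul_of_nonneg_left (peierls hψ A hA u) ha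
        · exact mul_le_mul_of_nonneg_left (peierls hψ B hB u) hb

/-- determinant of `x • 1 - A` as product over eigenvalues. -/
lemma det_smul_one_sub (A : Matrix ι ι ℝ) (hA : A.IsHermitian) (x : ℝ) :
    det (x • (1 : Matrix ι ι ℝ) - A) = ∏ i, (x - hA.eigenvalues i) := by
  set U : Matrix ι ι ℝ := (hA.eigenvectorUnitary : Matrix ι ι ℝ) with hU
  have hUU : U * star U = 1 := (Matrix.mem_unitaryGroup_iff).mp hA.eigenvectorUnitary.2
  have hUU' : star U * U = 1 := (Matrix.mem_unitaryGroup_iff').mp hA.eigenvectorUnitary.2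
  have key : x • (1 : Matrix ι ι ℝ) - A
      = U * (x • 1 - diagonal (RCLike.ofReal ∘ hA.eigenvalues)) * star U := by
    rw [Matrix.mul_sub, Matrix.sub_mul]
    congr 1
    · rw [Matrix.mul_smul, Matrix.mul_one, Matrix.smul_mul, hUU]
    · exact hA.spectral_theorem
  rw [key, det_mul, det_mul, mul_comm, ← mul_assoc, ← det_mul, hUU', det_one, one_mul]
  have : x • (1 : Matrix ι ι ℝ) - diagonal (RCLike.ofReal ∘ hA.eigenvalues)
      = diagonal (fun i => x - hA.eigenvalues i) := by
    rw [smul_one_eq_diagonal, diagonal_sub]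
    rfl
  rw [this, det_diagonal]

lemma eval_prod_map (g : ι → ℝ) (x : ℝ) :
    Polynomial.eval x ((Multiset.map (fun a => (Polynomial.X : ℝ[X]) - C a)
        (Multiset.map g Finset.univ.val)).prod) = ∏ i, (x - g i) := by
  rw [eval_multiset_prod, Multiset.map_map, Multiset.map_map, Finset.prod_eq_multiset_prod]
  congr 1
  apply Multiset.map_congr rfl
  intro a _
  simp

end Helpers

section Block

variable {m n : ℕ}

lemma key_det_identity (X : Matrix (Fin m) (Fin n) ℝ) (x : ℝ) (hx : x ≠ 0)
    (hH : (fromBlocks 0 X Xᵀ 0 : Matrix (Fin m ⊕ Fin n) (Fin m ⊕ Fin n) ℝ).IsHermitian)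
    (hXtX : (Xᵀ * X).IsHermitian) :
    x ^ n * ∏ k, (x - hH.eigenvalues k) = x ^ m * ∏ i, (x ^ 2 - hXtX.eigenvalues i) := by
  have hblock : x • (1 : Matrix (Fin m ⊕ Fin n) (Fin m ⊕ Fin n) ℝ) - fromBlocks 0 X Xᵀ 0
      = fromBlocks (x • 1) (-X) (-Xᵀ) (x • 1) := by
    rw [← fromBlocks_one, fromBlocks_smul]
    ext (i | i) (j | j) <;> simp [fromBlocks]
  have hinv : Invertible (x • (1 : Matrix (Fin m) (Fin m) ℝ)) :=
    ⟨x⁻¹ • 1, by rw [smul_mul_smul_comm, inv_mul_cancel₀ hx, mul_one, one_smul],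
      by rw [smul_mul_smul_comm, mul_inv_cancel₀ hx, mul_one, one_smul]⟩
  have hinvOf : ⅟(x • (1 : Matrix (Fin m) (Fin m) ℝ)) = x⁻¹ • 1 :=
    invOf_eq_right_inv (by rw [smul_mul_smul_comm, mul_inv_cancel₀ hx, mul_one, one_smul])
  have hdet1 : det (x • (1 : Matrix (Fin m ⊕ Fin n) (Fin m ⊕ Fin n) ℝ) - fromBlocks 0 X Xᵀ 0)
      = x ^ m * det (x • (1 : Matrix (Fin n) (Fin n) ℝ) - x⁻¹ • (Xᵀ * X)) := by
    rw [hblock, det_fromBlocks₁₁, hinvOf]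
    congr 1
    · rw [det_smul, det_one, mul_one, Fintype.card_fin]
    · congr 1
      rw [Matrix.mul_smul, Matrix.mul_one, Matrix.smul_mul, Matrix.neg_mul, Matrix.mul_neg,
        neg_neg]
  have hdet2 : x ^ n * det (x • (1 : Matrix (Fin n) (Fin n) ℝ) - x⁻¹ • (Xᵀ * X))
      = det (x ^ 2 • (1 : Matrix (Fin n) (Fin n) ℝ) - Xᵀ * X) := by
    rw [show (x:ℝ)^n = x ^ Fintype.card (Fin n) by rw [Fintype.card_fin], ← det_smul,
      smul_sub, smul_smul, smul_smul, mul_inv_cancel₀ hx, one_smul, ← sq]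
  calc x ^ n * ∏ k, (x - hH.eigenvalues k)
      = x ^ n * det (x • 1 - fromBlocks 0 X Xᵀ 0) := by rw [det_smul_one_sub _ hH]
    _ = x ^ n * (x ^ m * det (x • (1 : Matrix (Fin n) (Fin n) ℝ) - x⁻¹ • (Xᵀ * X))) := by
        rw [hdet1]
    _ = x ^ m * (x ^ n * det (x • (1 : Matrix (Fin n) (Fin n) ℝ) - x⁻¹ • (Xᵀ * X))) := by ring
    _ = x ^ m * det (x ^ 2 • (1 : Matrix (Fin n) (Fin n) ℝ) - Xᵀ * X) := by rw [hdet2]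
    _ = x ^ m * ∏ i, (x ^ 2 - hXtX.eigenvalues i) := by rw [det_smul_one_sub _ hXtX]

lemma multiset_eq_of_key (A : Matrix (Fin m) (Fin n) ℝ)
    (hH : (fromBlocks 0 A Aᵀ 0 : Matrix (Fin m ⊕ Fin n) (Fin m ⊕ Fin n) ℝ).IsHermitian)
    (hXtX : (Aᵀ * A).IsHermitian)
    (hev : ∀ i, 0 ≤ hXtX.eigenvalues i) :
    Multiset.replicate n (0:ℝ) + Finset.univ.val.map hH.eigenvalues
      = Multiset.replicate m (0:ℝ)
        + Finset.univ.val.map (fun i => Real.sqrt (hXtX.eigenvalues i))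
        + Finset.univ.val.map (fun i => -Real.sqrt (hXtX.eigenvalues i)) := by
  have key : ∀ x : ℝ, x ≠ 0 →
      x ^ n * ∏ k, (x - hH.eigenvalues k) = x ^ m * ∏ i, (x ^ 2 - hXtX.eigenvalues i) :=
    fun x hx => key_det_identity A x hx hH hXtX
  set M₁ := Multiset.replicate n (0:ℝ) + Finset.univ.val.map hH.eigenvalues with hM₁
  set M₂ := Multiset.replicate m (0:ℝ)
        + Finset.univ.val.map (fun i => Real.sqrt (hXtX.eigenvalues i))
        + Finset.univ.val.map (fun i => -Real.sqrt (hXtX.eigenvalues i)) with hM₂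
  have hP : (M₁.map fun a => (Polynomial.X : ℝ[X]) - C a).prod
      = (M₂.map fun a => (Polynomial.X : ℝ[X]) - C a).prod := by
    apply Polynomial.eq_of_infinite_eval_eq
    apply Set.Infinite.mono (s := {(0:ℝ)}ᶜ)
    · intro x hx
      have hx0 : x ≠ 0 := hx
      simp only [Set.mem_setOf_eq, hM₁, hM₂, Multiset.map_add, Multiset.prod_add, eval_mul,
        Multiset.map_replicate, Multiset.prod_replicate, eval_pow, eval_sub, eval_X, eval_C,
        sub_zero, eval_prod_map]
      have e3 : ∏ i, (x - -Real.sqrt (hXtX.eigenvalues i))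
          = ∏ i, (x + Real.sqrt (hXtX.eigenvalues i)) := by
        apply Finset.prod_congr rfl; intros; rw [sub_neg_eq_add]
      rw [e3, key x hx0, mul_assoc, ← Finset.prod_mul_distrib]
      congr 1
      apply Finset.prod_congr rfl
      intro i _
      rw [show (x - Real.sqrt (hXtX.eigenvalues i)) * (x + Real.sqrt (hXtX.eigenvalues i))
          = x ^ 2 - Real.sqrt (hXtX.eigenvalues i) ^ 2 from by ring, Real.sq_sqrt (hev i)]
    · exact (Set.finite_singleton 0).infinite_compl
  have := congrArg Polynomial.roots hP
  rwa [Polynomial.roots_multiset_prod_X_sub_C, Polynomial.roots_multiset_prod_X_sub_C] at this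

end Block

lemma psi_convex (γ p : ℝ) (hγ : 0 ≤ γ) (hp : 1 ≤ p) :
    ConvexOn ℝ Set.univ (fun μ : ℝ => (μ ^ 2 + γ) ^ (p / 2)) := by
  have hnorm : ∀ μ : ℝ, (μ ^ 2 + γ) ^ (p / 2) = ‖(⟨μ, Real.sqrt γ⟩ : ℂ)‖ ^ p := by
    intro μ
    have hnn : (0:ℝ) ≤ μ ^ 2 + γ := by positivity
    have habs : ‖(⟨μ, Real.sqrt γ⟩ : ℂ)‖ = Real.sqrt (μ ^ 2 + γ) := by
      rw [Complex.norm_def, Complex.normSq_mk, Real.mul_self_sqrt hγ,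
        ← pow_two]
    rw [habs, Real.sqrt_eq_rpow, ← Real.rpow_mul hnn]
    congr 1
    ring
  constructor
  · exact convex_univ
  · intro x _ y _ a b ha hb hab
    simp only [smul_eq_mul]
    rw [hnorm, hnorm, hnorm]
    have hz : (⟨a * x + b * y, Real.sqrt γ⟩ : ℂ)
        = a • (⟨x, Real.sqrt γ⟩ : ℂ) + b • (⟨y, Real.sqrt γ⟩ : ℂ) := by
      apply Complex.ext
      · simp
      · show Real.sqrt γ = (a • (⟨x, Real.sqrt γ⟩:ℂ) + b • (⟨y, Real.sqrt γ⟩:ℂ)).im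
        simp [Complex.smul_re, Complex.smul_im]
        linear_combination (-Real.sqrt γ) * hab
    have htri : ‖(⟨a * x + b * y, Real.sqrt γ⟩ : ℂ)‖
        ≤ a * ‖(⟨x, Real.sqrt γ⟩ : ℂ)‖ + b * ‖(⟨y, Real.sqrt γ⟩ : ℂ)‖ := by
      rw [hz]
      refine (norm_add_le _ _).trans ?_
      rw [norm_smul, norm_smul, Real.norm_eq_abs, Real.norm_eq_abs, abs_of_nonneg ha,
        abs_of_nonneg hb]
    have h1 : ‖(⟨a * x + b * y, Real.sqrt γ⟩ : ℂ)‖ ^ p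
        ≤ (a * ‖(⟨x, Real.sqrt γ⟩ : ℂ)‖ + b * ‖(⟨y, Real.sqrt γ⟩ : ℂ)‖) ^ p :=
      Real.rpow_le_rpow (norm_nonneg _) htri (le_trans zero_le_one hp)
    refine h1.trans ?_
    have := (convexOn_rpow hp).2 (Set.mem_Ici.mpr (norm_nonneg (⟨x, Real.sqrt γ⟩ : ℂ)))
      (Set.mem_Ici.mpr (norm_nonneg (⟨y, Real.sqrt γ⟩ : ℂ))) ha hb hab
    simpa using this

lemma eig_congr {ι : Type*} [Fintype ι] [DecidableEq ι] {A B : Matrix ι ι ℝ} (h : A = B)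
    (hA : A.IsHermitian) (hB : B.IsHermitian) : hA.eigenvalues = hB.eigenvalues := by
  subst h; rfl

/-- For `γ ≥ 0` and `p ≥ 1`, the smooth Schatten-p function
`f_p(X) = Tr((XᵀX + γI)^{p/2}) = Σ_i (λ_i(XᵀX) + γ)^{p/2}` is convex on `ℝ^{m×n}`. -/
theorem smooth_schatten_convex {m n : ℕ} (γ p : ℝ) (hγ : 0 ≤ γ) (hp : 1 ≤ p)
    (hH : ∀ X : Matrix (Fin m) (Fin n) ℝ, (Xᵀ * X).IsHermitian) :
    ConvexOn ℝ Set.univ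
      (fun X : Matrix (Fin m) (Fin n) ℝ =>
        ∑ i, ((hH X).eigenvalues i + γ) ^ (p / 2)) := by
  set ψ : ℝ → ℝ := fun μ => (μ ^ 2 + γ) ^ (p / 2) with hψdef
  have hψ : ConvexOn ℝ Set.univ ψ := psi_convex γ p hγ hp
  have hψ0 : ψ 0 = γ ^ (p / 2) := by simp [hψdef]
  -- hermitian dilation
  have hHH : ∀ X : Matrix (Fin m) (Fin n) ℝ,
      (fromBlocks 0 X Xᵀ 0 : Matrix (Fin m ⊕ Fin n) (Fin m ⊕ Fin n) ℝ).IsHermitian := by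
    intro X
    show _ᴴ = _
    simp [conjTranspose_eq_transpose_of_trivial, fromBlocks_transpose, transpose_transpose]
  set F : Matrix (Fin m) (Fin n) ℝ → ℝ := fun X => ∑ k, ψ ((hHH X).eigenvalues k) with hFdef
  -- the key identity
  have hkey : ∀ X : Matrix (Fin m) (Fin n) ℝ,
      (n : ℝ) * γ ^ (p / 2) + F X
        = (m : ℝ) * γ ^ (p / 2) + 2 * ∑ i, ((hH X).eigenvalues i + γ) ^ (p / 2) := by
    intro X
    have hev : ∀ i, 0 ≤ (hH X).eigenvalues i := fun i =>
      (Matrix.posSemidef_conjTranspose_mul_self X).eigenvalues_nonneg i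
    have hms := multiset_eq_of_key X (hHH X) (hH X) hev
    have := congrArg (fun M : Multiset ℝ => (M.map ψ).sum) hms
    simp only [Multiset.map_add, Multiset.sum_add, Multiset.map_replicate,
      Multiset.sum_replicate, Multiset.map_map] at this
    have e1' : (Multiset.map (ψ ∘ (hHH X).eigenvalues) Finset.univ.val).sum = F X := by
      simp only [hFdef]
      rw [Finset.sum_eq_multiset_sum]
      rfl
    have e2' : (Multiset.map (ψ ∘ fun i => Real.sqrt ((hH X).eigenvalues i))
        Finset.univ.val).sum = ∑ i, ((hH X).eigenvalues i + γ) ^ (p / 2) := by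
      rw [Finset.sum_eq_multiset_sum]
      congr 1
      apply Multiset.map_congr rfl
      intro i _
      simp only [Function.comp_apply, hψdef]
      rw [Real.sq_sqrt (hev i)]
    have e3' : (Multiset.map (ψ ∘ fun i => -Real.sqrt ((hH X).eigenvalues i))
        Finset.univ.val).sum = ∑ i, ((hH X).eigenvalues i + γ) ^ (p / 2) := by
      rw [Finset.sum_eq_multiset_sum]
      congr 1
      apply Multiset.map_congr rfl
      intro i _
      simp only [Function.comp_apply, hψdef]
      rw [neg_pow, show ((-1:ℝ))^2 = 1 by norm_num, one_mul, Real.sq_sqrt (hev i)]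
    rw [e1', e2', e3', hψ0] at this
    simp only [nsmul_eq_mul] at this
    linarith [this]
  -- convexity of F
  have hF : ∀ (X Y : Matrix (Fin m) (Fin n) ℝ) (a b : ℝ), 0 ≤ a → 0 ≤ b → a + b = 1 →
      F (a • X + b • Y) ≤ a * F X + b * F Y := by
    intro X Y a b ha hb hab
    have hEq : (fromBlocks 0 (a • X + b • Y) (a • X + b • Y)ᵀ 0
          : Matrix (Fin m ⊕ Fin n) (Fin m ⊕ Fin n) ℝ)
        = a • (fromBlocks 0 X Xᵀ 0) + b • (fromBlocks 0 Y Yᵀ 0) := by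
      ext (i | i) (j | j) <;>
        simp [fromBlocks, transpose_add, transpose_smul, Matrix.add_apply, Matrix.smul_apply]
    have hC : ((a • (fromBlocks 0 X Xᵀ 0 : Matrix (Fin m ⊕ Fin n) (Fin m ⊕ Fin n) ℝ)
        + b • (fromBlocks 0 Y Yᵀ 0))).IsHermitian := hEq ▸ hHH (a • X + b • Y)
    have hcongr := eig_congr hEq (hHH (a • X + b • Y)) hC
    calc F (a • X + b • Y) = ∑ k, ψ (hC.eigenvalues k) := by
          rw [hFdef]; dsimp only; rw [hcongr]
      _ ≤ a * ∑ j, ψ ((hHH X).eigenvalues j) + b * ∑ j, ψ ((hHH Y).eigenvalues j) :=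
          trace_psi_convex hψ _ _ (hHH X) (hHH Y) a b ha hb hab hC
      _ = a * F X + b * F Y := rfl
  -- conclude
  constructor
  · exact convex_univ
  · intro X _ Y _ a b ha hb hab
    simp only [smul_eq_mul]
    have h1 := hkey (a • X + b • Y)
    have h2 := hkey X
    have h3 := hkey Y
    have h4 := hF X Y a b ha hb hab
    set c := γ ^ (p / 2) with hc
    have k1 : 2 * ∑ i, ((hH (a • X + b • Y)).eigenvalues i + γ) ^ (p / 2)
        = F (a • X + b • Y) + ((n:ℝ) - m) * c := by linarith [h1]
    have k2 : 2 * ∑ i, ((hH X).eigenvalues i + γ) ^ (p / 2) = F X + ((n:ℝ) - m) * c := by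
      linarith [h2]
    have k3 : 2 * ∑ i, ((hH Y).eigenvalues i + γ) ^ (p / 2) = F Y + ((n:ℝ) - m) * c := by
      linarith [h3]
    have k4 : a * (2 * ∑ i, ((hH X).eigenvalues i + γ) ^ (p / 2))
        = a * (F X + ((n:ℝ) - m) * c) := by rw [k2]
    have k5 : b * (2 * ∑ i, ((hH Y).eigenvalues i + γ) ^ (p / 2))
        = b * (F Y + ((n:ℝ) - m) * c) := by rw [k3]
    have k6 : a * (((n:ℝ) - m) * c) + b * (((n:ℝ) - m) * c) = ((n:ℝ) - m) * c := by
      rw [← add_mul, hab, one_mul]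
    linarith [k1, k4, k5, k6, h4]
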